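/- Let P be a positive integer, n \ge 1, and k \ge 0, and suppose the parity sequence of the first n\cdot k iterates of P is periodic with period n, i.e. T^j(P) and T^{j \bmod n}(P) have the same parity for every j < n k. Then A_{nk}(P) = A_n(P)^k and B_{nk}(P) = B_n(P) \cdot \sum_{i=0}^{k-1} A_n(P)^i. -/

import Mathlib

open Filter

/-- The (accelerated) Collatz map `T(P) = P/2` if `P` even, `(3P+1)/2` if `P` odd. -/
def collatz (p : ℕ) : ℕ := if p % 2 = 0 then p / 2 else (3 * p + 1) / 2

/-- `collatzOddCount P n = m_n(P)`, the number of `k < n` with `T^k(P)` odd. -/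
def collatzOddCount (P n : ℕ) : ℕ :=
  ((Finset.range n).filter fun k => collatz^[k] P % 2 = 1).card

/-- The principal coefficient `A_n(P) = 3^{m_n(P)} / 2^n`. -/
noncomputable def collatzA (P n : ℕ) : ℝ := 3 ^ collatzOddCount P n / 2 ^ n

/-- The adjustment coefficient `B_n(P) = T^n(P) - A_n(P) * P`. -/
noncomputable def collatzB (P n : ℕ) : ℝ := (collatz^[n] P : ℝ) - collatzA P n * P

lemma collatz_cast (q : ℕ) :
    (collatz q : ℝ) = if q % 2 = 1 then (3 * (q:ℝ) + 1) / 2 else (q : ℝ) / 2 := by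
  unfold collatz
  rcases Nat.even_or_odd q with h | h
  · have h0 : q % 2 = 0 := Nat.even_iff.mp h
    rw [if_pos h0, if_neg (by omega)]
    obtain ⟨c, rfl⟩ := h
    have hc : (c + c) / 2 = c := by omega
    rw [hc]; push_cast; ring
  · have h1 : q % 2 = 1 := Nat.odd_iff.mp h
    rw [if_neg (by omega), if_pos h1]
    obtain ⟨c, rfl⟩ := h
    have hc : (3 * (2 * c + 1) + 1) / 2 = 3 * c + 2 := by omega
    rw [hc]; push_cast; ring

lemma oddCount_zero (P : ℕ) : collatzOddCount P 0 = 0 := by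
  simp [collatzOddCount]

lemma collatzA_zero (P : ℕ) : collatzA P 0 = 1 := by
  simp [collatzA, oddCount_zero]

lemma collatzB_zero (P : ℕ) : collatzB P 0 = 0 := by
  simp [collatzB, collatzA_zero]

lemma oddCount_succ (P n : ℕ) :
    collatzOddCount P (n + 1) =
      collatzOddCount P n + (if collatz^[n] P % 2 = 1 then 1 else 0) := by
  unfold collatzOddCount
  rw [Finset.range_add_one, Finset.filter_insert]
  split
  · rw [Finset.card_insert_of_notMem (by simp)]
  · simp

lemma oddCount_add (P a b : ℕ) :
    collatzOddCount P (a + b) = collatzOddCount P a + collatzOddCount (collatz^[a] P) b := by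
  induction b with
  | zero => simp [oddCount_zero]
  | succ b ih =>
      rw [← Nat.add_assoc, oddCount_succ, ih, oddCount_succ]
      have : collatz^[a + b] P = collatz^[b] (collatz^[a] P) := by
        rw [Nat.add_comm, Function.iterate_add_apply]
      rw [this, Nat.add_assoc]

lemma collatzA_add (P a b : ℕ) :
    collatzA P (a + b) = collatzA P a * collatzA (collatz^[a] P) b := by
  unfold collatzA
  rw [oddCount_add, pow_add, pow_add]
  ring

lemma collatzB_add (P a b : ℕ) :
    collatzB P (a + b) = collatzA (collatz^[a] P) b * collatzB P a + collatzB (collatz^[a] P) b := by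
  unfold collatzB
  rw [collatzA_add]
  have h : collatz^[a + b] P = collatz^[b] (collatz^[a] P) := by
    rw [Nat.add_comm, Function.iterate_add_apply]
  rw [h]
  ring

lemma collatzA_one (R : ℕ) :
    collatzA R 1 = if R % 2 = 1 then (3 : ℝ) / 2 else 1 / 2 := by
  unfold collatzA
  rw [show collatzOddCount R 1 = if R % 2 = 1 then 1 else 0 by
    rw [show (1:ℕ) = 0 + 1 from rfl, oddCount_succ, oddCount_zero]; simp; congr]
  split <;> norm_num

lemma collatzB_one (R : ℕ) :
    collatzB R 1 = if R % 2 = 1 then (1 : ℝ) / 2 else 0 := by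
  unfold collatzB
  rw [Function.iterate_one, collatz_cast, collatzA_one]
  split <;> ring

lemma oddCount_congr {P Q n : ℕ}
    (h : ∀ j < n, collatz^[j] P % 2 = collatz^[j] Q % 2) :
    collatzOddCount P n = collatzOddCount Q n := by
  unfold collatzOddCount
  congr 1
  apply Finset.filter_congr
  intro j hj
  rw [h j (Finset.mem_range.mp hj)]

lemma collatzA_congr {P Q n : ℕ}
    (h : ∀ j < n, collatz^[j] P % 2 = collatz^[j] Q % 2) :
    collatzA P n = collatzA Q n := by
  unfold collatzA; rw [oddCount_congr h]

lemma collatzB_congr {P Q n : ℕ}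
    (h : ∀ j < n, collatz^[j] P % 2 = collatz^[j] Q % 2) :
    collatzB P n = collatzB Q n := by
  induction n with
  | zero => rw [collatzB_zero, collatzB_zero]
  | succ n ih =>
      have hn : ∀ j < n, collatz^[j] P % 2 = collatz^[j] Q % 2 :=
        fun j hj => h j (Nat.lt_succ_of_lt hj)
      have hpar : collatz^[n] P % 2 = collatz^[n] Q % 2 := h n (Nat.lt_succ_self n)
      rw [collatzB_add P n 1, collatzB_add Q n 1, ih hn, collatzA_one, collatzA_one,
        collatzB_one, collatzB_one, hpar]

theorem stmt_8 (P : ℕ) (hP : 0 < P) (n : ℕ) (hn : 1 ≤ n) (k : ℕ)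
    (hper : ∀ j < n * k, collatz^[j] P % 2 = collatz^[j % n] P % 2) :
    collatzA P (n * k) = collatzA P n ^ k ∧
    collatzB P (n * k) = collatzB P n * ∑ i ∈ Finset.range k, collatzA P n ^ i := by
  induction k with
  | zero => simp [collatzA_zero, collatzB_zero]
  | succ k ih =>
      have hper' : ∀ j < n * k, collatz^[j] P % 2 = collatz^[j % n] P % 2 := by
        intro j hj
        exact hper j (hj.trans_le (Nat.mul_le_mul_left n (Nat.le_succ k)))
      obtain ⟨ihA, ihB⟩ := ih hper'
      set Q := collatz^[n * k] P with hQ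
      have hpar : ∀ j < n, collatz^[j] Q % 2 = collatz^[j] P % 2 := by
        intro j hj
        have hlt : n * k + j < n * (k + 1) := by rw [Nat.mul_succ]; omega
        have h1 := hper (n * k + j) hlt
        have h2 : collatz^[n * k + j] P = collatz^[j] Q := by
          rw [Nat.add_comm, Function.iterate_add_apply]
        have h3 : (n * k + j) % n = j := by
          rw [Nat.mul_add_mod, Nat.mod_eq_of_lt hj]
        rw [h2, h3] at h1
        exact h1
      have hA : collatzA Q n = collatzA P n := collatzA_congr hpar
      have hB : collatzB Q n = collatzB P n := collatzB_congr hpar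
      rw [Nat.mul_succ, collatzA_add, collatzB_add, ← hQ, hA, hB, ihA, ihB]
      constructor
      · rw [pow_succ]
      · rw [geom_sum_succ]
        ring
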